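/- Let y_m > 0 and let f : ℝ → ℝ be continuous and strictly positive on [0, y_m]. Set F(y) = ∫₀^y f(s) ds and h(y) = F(y_m) − F(y). Define g : [0, y_m) → ℝ by g(y) = ∫₀^y h(s)^{-3/2} ds (so g(0) = 0 and g'(y) = h(y)^{-3/2} > 0). Then the variational functional attains the value λ[y_m]: (1/2)·(∫₀^{y_m} g'(y)^{1/3} dy)³ / (∫₀^{y_m} f(y) g(y) dy) = (1/2)·(∫₀^{y_m} h(s)^{-1/2} ds)². -/

import Mathlib

open MeasureTheory intervalIntegral Set

/-- Attainment part of Theorem 1: the maximizing `g`, with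
`g(0) = 0` and `g'(y) = h(y)^{-3/2}`, attains the value
`λ[y_m] = (1/2)(∫₀^{y_m} h^{-1/2})²` in the variational principle (2.5). -/
theorem stmt_1 (y_m : ℝ) (hym : 0 < y_m) (f : ℝ → ℝ)
    (hf_cont : ContinuousOn f (Set.Icc 0 y_m))
    (hf_pos : ∀ y ∈ Set.Icc 0 y_m, 0 < f y)
    (F h g : ℝ → ℝ)
    (hF : ∀ y, F y = ∫ s in (0:ℝ)..y, f s)
    (hh : ∀ y, h y = F y_m - F y)
    (hg : ∀ y ∈ Set.Ico 0 y_m, g y = ∫ s in (0:ℝ)..y, (h s) ^ (-(3/2) : ℝ)) :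
    (1/2) * (∫ y in (0:ℝ)..y_m, ((h y) ^ (-(3/2) : ℝ)) ^ ((1:ℝ)/3)) ^ 3
        / (∫ y in (0:ℝ)..y_m, f y * g y)
      = (1/2) * (∫ s in (0:ℝ)..y_m, (h s) ^ (-(1/2) : ℝ)) ^ 2 := by
  have h0m : (0:ℝ) ∈ Icc (0:ℝ) y_m := ⟨le_rfl, hym.le⟩
  have hymm : y_m ∈ Icc (0:ℝ) y_m := ⟨hym.le, le_rfl⟩
  -- interval integrability of f on subintervals
  have hfi : ∀ a ∈ Icc (0:ℝ) y_m, ∀ b ∈ Icc (0:ℝ) y_m,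
      IntervalIntegrable f volume a b := fun a ha b hb =>
    (hf_cont.mono (uIcc_subset_Icc ha hb)).intervalIntegrable
  -- h as an integral
  have hFdiff : ∀ s ∈ Icc (0:ℝ) y_m, h s = ∫ y in s..y_m, f y := by
    intro s hs
    rw [hh, hF, hF,
      ← intervalIntegral.integral_add_adjacent_intervals (hfi 0 h0m s hs) (hfi s hs y_m hymm)]
    ring
  have hh_nonneg : ∀ s ∈ Icc (0:ℝ) y_m, 0 ≤ h s := by
    intro s hs
    rw [hFdiff s hs]
    apply intervalIntegral.integral_nonneg hs.2
    intro u hu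
    exact (hf_pos u ⟨le_trans hs.1 hu.1, hu.2⟩).le
  have hh_pos : ∀ s ∈ Ico (0:ℝ) y_m, 0 < h s := by
    intro s hs
    rw [hFdiff s ⟨hs.1, hs.2.le⟩]
    exact intervalIntegral.intervalIntegral_pos_of_pos_on (hfi s ⟨hs.1, hs.2.le⟩ y_m hymm)
      (fun u hu => hf_pos u ⟨le_trans hs.1 hu.1.le, hu.2.le⟩) hs.2
  -- lower bound for f and h
  obtain ⟨x₀, hx₀, hmin⟩ := isCompact_Icc.exists_isMinOn (nonempty_Icc.2 hym.le) hf_cont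
  set m := f x₀ with hm
  have hm_pos : 0 < m := hf_pos x₀ hx₀
  have hh_lb : ∀ s ∈ Icc (0:ℝ) y_m, m * (y_m - s) ≤ h s := by
    intro s hs
    rw [hFdiff s hs]
    have h1 : (∫ _ in s..y_m, m) ≤ ∫ y in s..y_m, f y := by
      apply intervalIntegral.integral_mono_on hs.2 intervalIntegrable_const (hfi s hs y_m hymm)
      intro u hu
      exact hmin ⟨le_trans hs.1 hu.1, hu.2⟩
    simpa [mul_comm] using h1
  -- continuity of h
  have hF_cont : ContinuousOn F (Icc 0 y_m) := by
    have hint : IntegrableOn f (uIcc (0:ℝ) y_m) volume := by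
      rw [uIcc_of_le hym.le]
      exact hf_cont.integrableOn_Icc
    have := intervalIntegral.continuousOn_primitive_interval (a := (0:ℝ)) (b := y_m)
      (μ := volume) hint
    rw [uIcc_of_le hym.le] at this
    exact this.congr fun y _ => hF y
  have hh_cont : ContinuousOn h (Icc 0 y_m) := by
    exact (continuousOn_const.sub hF_cont).congr fun y _ => hh y
  -- restricted measures agree
  have hres1 : volume.restrict (Ioc (0:ℝ) y_m) = volume.restrict (Ioo (0:ℝ) y_m) :=
    (Measure.restrict_congr_set Ioo_ae_eq_Ioc).symm
  have hres2 : volume.restrict (Ico (0:ℝ) y_m) = volume.restrict (Ioo (0:ℝ) y_m) :=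
    (Measure.restrict_congr_set Ioo_ae_eq_Ico).symm
  -- a.e.-measurability of the two rpow functions on (0, y_m]
  have haem_rpow : ∀ c : ℝ, AEMeasurable (fun s => h s ^ (c : ℝ))
      (volume.restrict (Ioc (0:ℝ) y_m)) := by
    intro c
    have hcont : ContinuousOn (fun s => h s ^ (c : ℝ)) (Ioo 0 y_m) :=
      (hh_cont.mono Ioo_subset_Icc_self).rpow_const
        (fun x hx => Or.inl (hh_pos x ⟨hx.1.le, hx.2⟩).ne')
    rw [hres1]
    exact hcont.aemeasurable measurableSet_Ioo
  have haem_f : AEMeasurable f (volume.restrict (Ioc (0:ℝ) y_m)) :=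
    (hf_cont.mono Ioc_subset_Icc_self).aemeasurable measurableSet_Ioc
  -- integrability of h^(-1/2) on (0, y_m]
  have hint_half : IntegrableOn (fun s => h s ^ (-(1/2) : ℝ)) (Ioc 0 y_m) volume := by
    have hb0 : IntervalIntegrable (fun x : ℝ => x ^ (-(1/2) : ℝ)) volume 0 y_m :=
      intervalIntegral.intervalIntegrable_rpow' (by norm_num)
    have hb1 : IntervalIntegrable (fun x : ℝ => (y_m - x) ^ (-(1/2) : ℝ)) volume 0 y_m := by
      have := hb0.comp_sub_left y_m
      simpa using this.symm
    have hb2 : IntegrableOn (fun x : ℝ => m ^ (-(1/2) : ℝ) * (y_m - x) ^ (-(1/2) : ℝ))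
        (Ioc 0 y_m) volume := by
      rw [← intervalIntegrable_iff_integrableOn_Ioc_of_le hym.le]
      exact hb1.const_mul _
    apply Integrable.mono hb2 ((haem_rpow _).aestronglyMeasurable)
    rw [ae_restrict_iff' measurableSet_Ioc]
    filter_upwards with s hs
    rcases eq_or_lt_of_le hs.2 with hsm | hsm
    · simp [hsm, hh y_m, Real.zero_rpow, Real.norm_eq_abs]
    · have hpos : 0 < m * (y_m - s) := mul_pos hm_pos (by linarith)
      have hle : m * (y_m - s) ≤ h s := hh_lb s ⟨hs.1.le, hs.2⟩
      have h1 : h s ^ (-(1/2) : ℝ) ≤ (m * (y_m - s)) ^ (-(1/2) : ℝ) :=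
        Real.rpow_le_rpow_of_nonpos hpos hle (by norm_num)
      have h2 : (m * (y_m - s)) ^ (-(1/2) : ℝ)
          = m ^ (-(1/2) : ℝ) * (y_m - s) ^ (-(1/2) : ℝ) :=
        Real.mul_rpow hm_pos.le (by linarith)
      have h3 : 0 ≤ h s ^ (-(1/2) : ℝ) :=
        Real.rpow_nonneg (hh_nonneg s ⟨hs.1.le, hs.2⟩) _
      have h4 : 0 ≤ m ^ (-(1/2) : ℝ) * (y_m - s) ^ (-(1/2) : ℝ) :=
        mul_nonneg (Real.rpow_nonneg hm_pos.le _) (Real.rpow_nonneg (by linarith) _)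
      rw [Real.norm_eq_abs, Real.norm_eq_abs, abs_of_nonneg h3, abs_of_nonneg h4]
      rw [← h2]; exact h1
  -- interval-integrability of h^(-1/2)
  have hint_half' : IntervalIntegrable (fun s => h s ^ (-(1/2) : ℝ)) volume 0 y_m := by
    rw [intervalIntegrable_iff_integrableOn_Ioc_of_le hym.le]
    exact hint_half
  -- positivity of I
  have hI_pos : 0 < ∫ s in (0:ℝ)..y_m, h s ^ (-(1/2) : ℝ) := by
    apply intervalIntegral.intervalIntegral_pos_of_pos_on hint_half'
    · intro u hu
      exact Real.rpow_pos_of_pos (hh_pos u ⟨hu.1.le, hu.2⟩) _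
    · exact hym
  -- the numerator integrand simplifies
  have hnum : (∫ y in (0:ℝ)..y_m, ((h y) ^ (-(3/2) : ℝ)) ^ ((1:ℝ)/3))
      = ∫ s in (0:ℝ)..y_m, h s ^ (-(1/2) : ℝ) := by
    apply intervalIntegral.integral_congr
    intro y hy
    rw [uIcc_of_le hym.le] at hy
    show ((h y) ^ (-(3/2) : ℝ)) ^ ((1:ℝ)/3) = h y ^ (-(1/2) : ℝ)
    rw [← Real.rpow_mul (hh_nonneg y hy)]
    norm_num
  -- nonnegativity of the integrand ψ on [0, y_m]
  have hψ_nonneg : ∀ s ∈ Icc (0:ℝ) y_m, 0 ≤ h s ^ (-(3/2) : ℝ) := fun s hs =>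
    Real.rpow_nonneg (hh_nonneg s hs) _
  -- g is given by an integral of a nonnegative function, hence monotone and nonneg on Ico
  have hψ_int : ∀ y ∈ Icc (0:ℝ) y_m, y < y_m →
      IntervalIntegrable (fun s => h s ^ (-(3/2) : ℝ)) volume 0 y := by
    intro y hy hylt
    apply ContinuousOn.intervalIntegrable
    have hsub : uIcc (0:ℝ) y ⊆ Icc 0 y := by rw [uIcc_of_le hy.1]
    refine ContinuousOn.mono ?_ hsub
    refine (hh_cont.mono (Icc_subset_Icc_right hy.2)).rpow_const ?_
    intro x hx
    exact Or.inl (hh_pos x ⟨hx.1, lt_of_le_of_lt hx.2 hylt⟩).ne'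
  have hg_nonneg : ∀ y ∈ Ico (0:ℝ) y_m, 0 ≤ g y := by
    intro y hy
    rw [hg y hy]
    apply intervalIntegral.integral_nonneg hy.1
    intro u hu
    exact hψ_nonneg u ⟨hu.1, hu.2.trans hy.2.le⟩
  have hg_mono : MonotoneOn g (Ico (0:ℝ) y_m) := by
    intro y₁ hy₁ y₂ hy₂ hle
    have hsplit : (∫ s in (0:ℝ)..y₁, h s ^ (-(3/2) : ℝ))
        + (∫ s in y₁..y₂, h s ^ (-(3/2) : ℝ)) = ∫ s in (0:ℝ)..y₂, h s ^ (-(3/2) : ℝ) :=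
      intervalIntegral.integral_add_adjacent_intervals
        (hψ_int y₁ ⟨hy₁.1, hy₁.2.le⟩ hy₁.2)
        ((hψ_int y₂ ⟨hy₂.1, hy₂.2.le⟩ hy₂.2).mono_set
          (by rw [uIcc_of_le hle, uIcc_of_le hy₂.1]; exact Icc_subset_Icc_left hy₁.1))
    have hnn : 0 ≤ ∫ s in y₁..y₂, h s ^ (-(3/2) : ℝ) := by
      apply intervalIntegral.integral_nonneg hle
      intro u hu
      exact hψ_nonneg u ⟨le_trans hy₁.1 hu.1, hu.2.trans hy₂.2.le⟩
    rw [hg y₁ hy₁, hg y₂ hy₂, ← hsplit]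
    linarith
  have hg_aem : AEMeasurable g (volume.restrict (Ioc (0:ℝ) y_m)) := by
    rw [hres1, ← hres2]
    exact aemeasurable_restrict_of_monotoneOn measurableSet_Ico hg_mono
  -- the product function for Tonelli
  set ψ : ℝ → ℝ := fun s => h s ^ (-(3/2) : ℝ) with hψdef
  set ψI : ℝ → ℝ := (Ioc (0:ℝ) y_m).indicator ψ with hψI
  set fI : ℝ → ℝ := (Ioc (0:ℝ) y_m).indicator f with hfI
  have hψI_aem : AEMeasurable ψI volume :=
    (aemeasurable_indicator_iff measurableSet_Ioc).2 (haem_rpow _)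
  have hfI_aem : AEMeasurable fI volume :=
    (aemeasurable_indicator_iff measurableSet_Ioc).2 haem_f
  set P : ℝ × ℝ → ENNReal := fun p =>
    ENNReal.ofReal (ψI p.1) * ENNReal.ofReal (fI p.2)
      * ({q : ℝ × ℝ | q.1 ≤ q.2}.indicator 1 p) with hP
  have hP_aem : AEMeasurable P (volume.prod volume) := by
    apply AEMeasurable.mul
    · exact ((ENNReal.measurable_ofReal.comp_aemeasurable hψI_aem).comp_fst).mul
        ((ENNReal.measurable_ofReal.comp_aemeasurable hfI_aem).comp_snd)
    · exact ((measurable_one.indicator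
        (measurableSet_le measurable_fst measurable_snd))).aemeasurable
  -- first iterated integral: integrate in s first
  have hform1 : ∫⁻ p, P p ∂(volume.prod volume)
      = ∫⁻ y in Ioc (0:ℝ) y_m,
          ENNReal.ofReal (f y) * ∫⁻ s in Ioc (0:ℝ) y, ENNReal.ofReal (ψ s) := by
    rw [lintegral_prod_symm P hP_aem]
    have hpt : ∀ y : ℝ, (∫⁻ s, P (s, y)) = (Ioc (0:ℝ) y_m).indicator
        (fun y => ENNReal.ofReal (f y) * ∫⁻ s in Ioc (0:ℝ) y, ENNReal.ofReal (ψ s)) y := by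
      intro y
      by_cases hy : y ∈ Ioc (0:ℝ) y_m
      · rw [indicator_of_mem hy]
        have hpt2 : ∀ s : ℝ, P (s, y)
            = ENNReal.ofReal (f y)
              * (Ioc (0:ℝ) y).indicator (fun s => ENNReal.ofReal (ψ s)) s := by
          intro s
          simp only [hP, hψI, hfI, indicator, mem_Ioc, mem_setOf_eq]
          by_cases h1 : 0 < s
          · by_cases h2 : s ≤ y
            · have h3 : s ≤ y_m := h2.trans hy.2
              simp [h1, h2, h3, hy.1, hy.2, mul_comm]
            · by_cases h3 : s ≤ y_m <;> simp [h1, h2, h3, hy.1, hy.2]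
          · simp [h1]
        calc (∫⁻ s, P (s, y))
            = ∫⁻ s, ENNReal.ofReal (f y)
                * (Ioc (0:ℝ) y).indicator (fun s => ENNReal.ofReal (ψ s)) s := by
              exact lintegral_congr hpt2
          _ = ENNReal.ofReal (f y)
                * ∫⁻ s, (Ioc (0:ℝ) y).indicator (fun s => ENNReal.ofReal (ψ s)) s :=
              lintegral_const_mul' _ _ ENNReal.ofReal_ne_top
          _ = ENNReal.ofReal (f y) * ∫⁻ s in Ioc (0:ℝ) y, ENNReal.ofReal (ψ s) := by
              rw [lintegral_indicator measurableSet_Ioc]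
      · rw [indicator_of_notMem hy]
        have hfIy : fI y = 0 := indicator_of_notMem hy f
        have : ∀ s : ℝ, P (s, y) = 0 := by
          intro s
          simp [hP, hfIy]
        simp [this]
    rw [lintegral_congr hpt, lintegral_indicator measurableSet_Ioc]
  -- second iterated integral: integrate in y first
  have hform2 : ∫⁻ p, P p ∂(volume.prod volume)
      = ∫⁻ s in Ioc (0:ℝ) y_m,
          ENNReal.ofReal (ψ s)
            * ∫⁻ y in Ioc (0:ℝ) y_m ∩ Ici s, ENNReal.ofReal (f y) := by
    rw [lintegral_prod P hP_aem]
    have hpt : ∀ s : ℝ, (∫⁻ y, P (s, y)) = (Ioc (0:ℝ) y_m).indicator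
        (fun s => ENNReal.ofReal (ψ s)
          * ∫⁻ y in Ioc (0:ℝ) y_m ∩ Ici s, ENNReal.ofReal (f y)) s := by
      intro s
      have hpt2 : ∀ y : ℝ, P (s, y)
          = ENNReal.ofReal (ψI s)
            * (Ioc (0:ℝ) y_m ∩ Ici s).indicator (fun y => ENNReal.ofReal (f y)) y := by
        intro y
        simp only [hP, hψI, hfI, indicator, mem_Ioc, mem_setOf_eq, mem_inter_iff, mem_Ici]
        by_cases h1 : 0 < y ∧ y ≤ y_m
        · by_cases h2 : s ≤ y <;> simp [h1, h2, mul_assoc]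
        · simp [h1]
      have hconst : (∫⁻ y, P (s, y))
          = ENNReal.ofReal (ψI s)
            * ∫⁻ y in Ioc (0:ℝ) y_m ∩ Ici s, ENNReal.ofReal (f y) := by
        rw [lintegral_congr hpt2, lintegral_const_mul' _ _ ENNReal.ofReal_ne_top,
          lintegral_indicator (measurableSet_Ioc.inter measurableSet_Ici)]
      rw [hconst]
      by_cases hs : s ∈ Ioc (0:ℝ) y_m
      · rw [indicator_of_mem hs, hψI, indicator_of_mem hs]
      · rw [indicator_of_notMem hs, hψI, indicator_of_notMem hs]
        simp
    rw [lintegral_congr hpt, lintegral_indicator measurableSet_Ioc]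
  -- evaluate the first form as ∫⁻ ofReal (f * g)
  have hA1 : ∫⁻ p, P p ∂(volume.prod volume)
      = ∫⁻ y in Ioc (0:ℝ) y_m, ENNReal.ofReal (f y * g y) := by
    rw [hform1, hres1]
    apply setLIntegral_congr_fun measurableSet_Ioo
    intro y hy
    beta_reduce
    have hy' : y ∈ Ico (0:ℝ) y_m := ⟨hy.1.le, hy.2⟩
    have hψcont : ContinuousOn ψ (Icc 0 y) := by
      refine (hh_cont.mono (Icc_subset_Icc_right hy.2.le)).rpow_const ?_
      intro x hx
      exact Or.inl (hh_pos x ⟨hx.1, lt_of_le_of_lt hx.2 hy.2⟩).ne'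
    have hint : IntegrableOn ψ (Ioc 0 y) volume :=
      (hψcont.integrableOn_Icc).mono_set Ioc_subset_Icc_self
    have hnn : 0 ≤ᵐ[volume.restrict (Ioc (0:ℝ) y)] ψ := by
      filter_upwards [ae_restrict_mem measurableSet_Ioc] with u hu
      exact hψ_nonneg u ⟨hu.1.le, hu.2.trans hy.2.le⟩
    rw [← ofReal_integral_eq_lintegral_ofReal hint hnn,
      ← intervalIntegral.integral_of_le hy.1.le, ← hg y hy',
      ← ENNReal.ofReal_mul (hf_pos y ⟨hy.1.le, hy.2.le⟩).le]
  -- evaluate the second form as ofReal of the target integral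
  have hA2 : ∫⁻ p, P p ∂(volume.prod volume)
      = ENNReal.ofReal (∫ s in Ioc (0:ℝ) y_m, h s ^ (-(1/2) : ℝ)) := by
    rw [hform2, hres1]
    have hint2 : IntegrableOn (fun s => h s ^ (-(1/2) : ℝ)) (Ioo 0 y_m) volume :=
      hint_half.mono_set Ioo_subset_Ioc_self
    have hnn2 : 0 ≤ᵐ[volume.restrict (Ioo (0:ℝ) y_m)] fun s => h s ^ (-(1/2) : ℝ) := by
      filter_upwards [ae_restrict_mem measurableSet_Ioo] with u hu
      exact Real.rpow_nonneg (hh_nonneg u ⟨hu.1.le, hu.2.le⟩) _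
    rw [ofReal_integral_eq_lintegral_ofReal hint2 hnn2]
    apply setLIntegral_congr_fun measurableSet_Ioo
    intro s hs
    beta_reduce
    have hsI : s ∈ Icc (0:ℝ) y_m := ⟨hs.1.le, hs.2.le⟩
    have hIcc2 : Ioc (0:ℝ) y_m ∩ Ici s = Icc s y_m := by
      ext z
      simp only [mem_inter_iff, mem_Ioc, mem_Ici, mem_Icc]
      constructor
      · rintro ⟨⟨_, hz2⟩, hz3⟩
        exact ⟨hz3, hz2⟩
      · rintro ⟨hz1, hz2⟩
        exact ⟨⟨lt_of_lt_of_le hs.1 hz1, hz2⟩, hz1⟩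
    have hfint : IntegrableOn f (Icc s y_m) volume :=
      (hf_cont.mono (Icc_subset_Icc hs.1.le le_rfl)).integrableOn_Icc
    have hfnn : 0 ≤ᵐ[volume.restrict (Icc s y_m)] f := by
      filter_upwards [ae_restrict_mem measurableSet_Icc] with u hu
      exact (hf_pos u ⟨le_trans hs.1.le hu.1, hu.2⟩).le
    rw [hIcc2, ← ofReal_integral_eq_lintegral_ofReal hfint hfnn]
    have hval : (∫ y in Icc s y_m, f y) = h s := by
      rw [integral_Icc_eq_integral_Ioc, ← intervalIntegral.integral_of_le hs.2.le,
        hFdiff s hsI]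
    rw [hval, ← ENNReal.ofReal_mul (Real.rpow_nonneg (hh_nonneg s hsI) _)]
    congr 1
    have hp : 0 < h s := hh_pos s ⟨hs.1.le, hs.2⟩
    have h1 : h s ^ (-(3/2) : ℝ) * h s ^ (1 : ℝ) = h s ^ ((-(3/2)) + 1 : ℝ) :=
      (Real.rpow_add hp _ _).symm
    rw [Real.rpow_one] at h1
    show h s ^ (-(3/2) : ℝ) * h s = h s ^ (-(1/2) : ℝ)
    rw [h1]
    norm_num
  -- conclude: the denominator equals the integral of h^(-1/2)
  have hD : (∫ y in (0:ℝ)..y_m, f y * g y)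
      = ∫ s in (0:ℝ)..y_m, h s ^ (-(1/2) : ℝ) := by
    rw [intervalIntegral.integral_of_le hym.le, intervalIntegral.integral_of_le hym.le]
    have hfg_aesm : AEStronglyMeasurable (fun y => f y * g y)
        (volume.restrict (Ioc (0:ℝ) y_m)) :=
      (haem_f.mul hg_aem).aestronglyMeasurable
    have hfg_nn : 0 ≤ᵐ[volume.restrict (Ioc (0:ℝ) y_m)] fun y => f y * g y := by
      rw [hres1]
      filter_upwards [ae_restrict_mem measurableSet_Ioo] with y hy
      exact mul_nonneg (hf_pos y ⟨hy.1.le, hy.2.le⟩).le (hg_nonneg y ⟨hy.1.le, hy.2⟩)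
    rw [integral_eq_lintegral_of_nonneg_ae hfg_nn hfg_aesm, ← hA1, hA2,
      ENNReal.toReal_ofReal]
    apply setIntegral_nonneg measurableSet_Ioc
    intro u hu
    exact Real.rpow_nonneg (hh_nonneg u ⟨hu.1.le, hu.2⟩) _
  rw [hnum, hD]
  rw [div_eq_iff (by
    rw [← intervalIntegral.integral_of_le hym.le] at *
    exact hI_pos.ne')]
  ring
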